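/- arXiv:1810.02456 — 2 statements merged into one kernel-verified Lean document; each statement's English description precedes it below -/
import Mathlib

section
/- Let G₁ and G₂ be strongly connected directed graphs with periods d₁ and d₂. Then every vertex of the Kronecker product graph G₁ ⊗ G₂ that lies on a cycle lies on cycles whose lengths have greatest common divisor equal to lcm(d₁, d₂); in particular if a connected component of G₁ ⊗ G₂ is strongly connected, its period equals lcm(d₁,d₂). -/
/-- Edge relation of the Kronecker (tensor) product of two directed graphs. -/
def prodRel {V₁ V₂ : Type*} (R₁ : V₁ → V₁ → Prop) (R₂ : V₂ → V₂ → Prop) :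
    V₁ × V₂ → V₁ × V₂ → Prop := fun a b => R₁ a.1 b.1 ∧ R₂ a.2 b.2

/-- There is a directed path of length `k` (a sequence of `k` consecutive edges)
from `u` to `v` in the graph with edge relation `R`. -/
def PathOfLength {V : Type*} (R : V → V → Prop) (k : ℕ) (u v : V) : Prop :=
  ∃ f : ℕ → V, f 0 = u ∧ f k = v ∧ ∀ i < k, R (f i) (f (i + 1))

/-- A directed graph is strongly connected if every vertex reaches every other. -/
def StronglyConnected {V : Type*} (R : V → V → Prop) : Prop :=
  ∀ u v : V, Relation.ReflTransGen R u v

/-- The set of lengths of directed cycles through the vertex `u`. -/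
def cycleLengthsAt {V : Type*} (R : V → V → Prop) (u : V) : Set ℕ :=
  {k | 0 < k ∧ PathOfLength R k u u}

/-- The set of lengths of all directed cycles in the graph. -/
def cycleLengths {V : Type*} (R : V → V → Prop) : Set ℕ :=
  {k | 0 < k ∧ ∃ u, PathOfLength R k u u}

/-- `d` is the greatest common divisor of the set `S` of natural numbers. -/
def IsGcdOfSet (d : ℕ) (S : Set ℕ) : Prop :=
  (∀ k ∈ S, d ∣ k) ∧ ∀ e : ℕ, (∀ k ∈ S, e ∣ k) → e ∣ d


namespace KronAux

lemma path_zero {V : Type*} {R : V → V → Prop} {u v : V} (h : PathOfLength R 0 u v) : u = v := by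
  obtain ⟨f, h0, hk, _⟩ := h; rw [← h0, ← hk]

lemma path_trans {V : Type*} {R : V → V → Prop} {k l : ℕ} {u v w : V}
    (h1 : PathOfLength R k u v) (h2 : PathOfLength R l v w) :
    PathOfLength R (k + l) u w := by
  obtain ⟨f, hf0, hfk, hf⟩ := h1
  obtain ⟨g, hg0, hgl, hg⟩ := h2
  refine ⟨fun i => if i < k then f i else g (i - k), ?_, ?_, ?_⟩
  · by_cases h : 0 < k
    · simpa [h] using hf0
    · have hk0 : k = 0 := by omega
      subst hk0
      simp only [lt_irrefl, if_neg, Nat.sub_zero, not_lt_zero', if_false]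
      rw [hg0, ← hfk, hf0]
  · have h : ¬ (k + l < k) := by omega
    simp [h, hgl]
  · intro i hi
    by_cases h1 : i + 1 < k
    · have h0 : i < k := by omega
      simpa [h0, h1] using hf i h0
    · by_cases h0 : i < k
      · have hik : i + 1 = k := by omega
        have he := hf i h0
        have : g (i + 1 - k) = f (i + 1) := by
          rw [hik, Nat.sub_self, hg0, hfk]
        simp only [h0, if_pos, h1, if_neg, this]
        exact he
      · have hl : i - k < l := by omega
        have he := hg (i-k) hl
        have h2 : ¬ (i + 1 < k) := h1
        have : i + 1 - k = (i - k) + 1 := by omega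
        simp only [h0, if_neg, h2, this]
        exact he

lemma path_single {V : Type*} {R : V → V → Prop} {u v : V} (h : R u v) : PathOfLength R 1 u v := by
  refine ⟨fun i => if i = 0 then u else v, by simp, by simp, ?_⟩
  intro i hi
  have h0 : i = 0 := by omega
  subst h0
  simpa using h

lemma rtg_path {V : Type*} {R : V → V → Prop} {u v : V} (h : Relation.ReflTransGen R u v) :
    ∃ k, PathOfLength R k u v := by
  induction h with
  | refl => exact ⟨0, fun _ => u, rfl, rfl, by omega⟩
  | tail _ hbc ih =>
    obtain ⟨k, hk⟩ := ih
    exact ⟨k + 1, path_trans hk (path_single hbc)⟩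

lemma path_repeat {V : Type*} {R : V → V → Prop} {u : V} {a : ℕ}
    (h : PathOfLength R a u u) (n : ℕ) : PathOfLength R (a * n) u u := by
  induction n with
  | zero => exact ⟨fun _ => u, rfl, by simp, by omega⟩
  | succ n ih =>
    have := path_trans ih h
    rw [Nat.mul_succ]
    exact this


lemma closure_dvd {S : Set ℕ} {d : ℕ} (h : ∀ k ∈ S, d ∣ k) :
    ∀ t ∈ AddSubmonoid.closure S, d ∣ t := by
  intro t ht
  induction ht using AddSubmonoid.closure_induction with
  | mem x hx => exact h x hx
  | zero => exact dvd_zero d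
  | add x y _ _ hx hy => exact dvd_add hx hy

lemma closure_mem_of_pos {S : Set ℕ} (hadd : ∀ a ∈ S, ∀ b ∈ S, a + b ∈ S) :
    ∀ t ∈ AddSubmonoid.closure S, t = 0 ∨ t ∈ S := by
  intro t ht
  induction ht using AddSubmonoid.closure_induction with
  | mem x hx => exact Or.inr hx
  | zero => exact Or.inl rfl
  | add x y _ _ hx hy =>
    rcases hx with rfl | hx
    · simpa using hy
    · rcases hy with rfl | hy
      · exact Or.inr (by simpa using hx)
      · exact Or.inr (hadd _ hx _ hy)

lemma bezout {S : Set ℕ} {d : ℕ} (hd : IsGcdOfSet d S) :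
    ∃ a b : ℕ, a ∈ AddSubmonoid.closure S ∧ b ∈ AddSubmonoid.closure S ∧ a = b + d := by
  classical
  set I : Ideal ℤ := Ideal.span ((fun n : ℕ => (n : ℤ)) '' S) with hI
  have hgen : ∀ s ∈ S, (Submodule.IsPrincipal.generator I) ∣ (s : ℤ) := by
    intro s hs
    exact (Submodule.IsPrincipal.mem_iff_generator_dvd I).mp
      (Ideal.subset_span ⟨s, hs, rfl⟩)
  have h1 : (Submodule.IsPrincipal.generator I).natAbs ∣ d := by
    apply hd.2
    intro k hk
    have := hgen k hk
    exact Int.ofNat_dvd.mp (Int.natAbs_dvd.mpr this)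
  have h2 : (d : ℤ) ∣ Submodule.IsPrincipal.generator I := by
    have hle : I ≤ Ideal.span {(d : ℤ)} := by
      rw [hI, Ideal.span_le]
      rintro x ⟨s, hs, rfl⟩
      rw [SetLike.mem_coe, Ideal.mem_span_singleton]
      exact Int.natCast_dvd_natCast.mpr (hd.1 s hs)
    have := hle (Submodule.IsPrincipal.generator_mem I)
    rwa [Ideal.mem_span_singleton] at this
  have hdI : (d : ℤ) ∈ I := by
    rw [Submodule.IsPrincipal.mem_iff_generator_dvd]
    have : Submodule.IsPrincipal.generator I ∣ ((Submodule.IsPrincipal.generator I).natAbs : ℤ) :=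
      Int.dvd_natAbs.mpr dvd_rfl
    calc Submodule.IsPrincipal.generator I ∣ ((Submodule.IsPrincipal.generator I).natAbs : ℤ) := this
      _ ∣ (d : ℤ) := Int.ofNat_dvd.mpr h1
  -- now express membership in span as a difference of two closure elements
  set T := AddSubmonoid.closure S with hT
  set D : Submodule ℤ ℤ :=
    { carrier := {z : ℤ | ∃ a ∈ T, ∃ b ∈ T, z = (a : ℤ) - (b : ℤ)}
      add_mem' := by
        rintro x y ⟨a, ha, b, hb, rfl⟩ ⟨c, hc, e, he, rfl⟩
        exact ⟨a + c, add_mem ha hc, b + e, add_mem hb he, by push_cast; ring⟩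
      zero_mem' := ⟨0, zero_mem T, 0, zero_mem T, by simp⟩
      smul_mem' := by
        rintro c x ⟨a, ha, b, hb, rfl⟩
        rcases c with n | n
        · exact ⟨n * a, by simpa [nsmul_eq_mul] using AddSubmonoid.nsmul_mem _ ha n,
            n * b, by simpa [nsmul_eq_mul] using AddSubmonoid.nsmul_mem _ hb n,
            by push_cast [smul_eq_mul, Int.ofNat_eq_natCast]; ring⟩
        · exact ⟨(n + 1) * b, by simpa [nsmul_eq_mul] using AddSubmonoid.nsmul_mem _ hb (n + 1),
            (n + 1) * a, by simpa [nsmul_eq_mul] using AddSubmonoid.nsmul_mem _ ha (n + 1),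
            by push_cast [smul_eq_mul, Int.negSucc_eq]; ring⟩ } with hD
  have hID : I ≤ D := by
    rw [hI, Ideal.span_le]
    rintro x ⟨s, hs, rfl⟩
    exact ⟨s, AddSubmonoid.subset_closure hs, 0, zero_mem T, by simp⟩
  obtain ⟨a, ha, b, hb, hab⟩ := hID hdI
  exact ⟨a, b, ha, hb, by omega⟩

lemma multiples_mem {S : Set ℕ} {d : ℕ} (hd : IsGcdOfSet d S) :
    ∃ N : ℕ, ∀ n : ℕ, N ≤ n → d ∣ n → n ∈ AddSubmonoid.closure S := by
  obtain ⟨a, b, ha, hb, hab⟩ := bezout hd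
  rcases Nat.eq_zero_or_pos d with rfl | hdpos
  · refine ⟨0, fun n _ hn => ?_⟩
    obtain rfl : n = 0 := Nat.eq_zero_of_zero_dvd hn
    exact zero_mem _
  · have hbd : d ∣ b := closure_dvd hd.1 b hb
    obtain ⟨y, hy⟩ := hbd
    refine ⟨y * y * d, fun n hn hdn => ?_⟩
    obtain ⟨k, rfl⟩ := hdn
    have hk : y * y ≤ k := by
      by_contra hlt
      push_neg at hlt
      have : d * k < y * y * d := by nlinarith
      omega
    rcases Nat.eq_zero_or_pos y with rfl | hypos
    · -- b = 0, a = d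
      have hae : a = d := by omega
      have : k • a ∈ AddSubmonoid.closure S := AddSubmonoid.nsmul_mem _ ha k
      simpa [nsmul_eq_mul, hae, Nat.mul_comm] using this
    · set m := k / y with hm
      set r := k % y with hr
      have hry : r < y := Nat.mod_lt _ hypos
      have hmy : y ≤ m := Nat.le_div_iff_mul_le hypos |>.mpr (by nlinarith)
      have hrm : r ≤ m := by omega
      have hkmr : k = m * y + r := by
        rw [hm, hr, Nat.mul_comm]; exact (Nat.div_add_mod k y).symm
      have hkey : d * k = r * a + (m - r) * b := by
        have hmr : r + (m - r) = m := by omega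
        calc d * k = d * (m * y + r) := by rw [← hkmr]
          _ = m * (d * y) + r * d := by ring
          _ = m * b + r * d := by rw [← hy]
          _ = (r + (m - r)) * b + r * d := by rw [hmr]
          _ = r * (b + d) + (m - r) * b := by ring
          _ = r * a + (m - r) * b := by rw [← hab]
      rw [hkey]
      exact add_mem
        (by simpa [nsmul_eq_mul] using AddSubmonoid.nsmul_mem _ ha r)
        (by simpa [nsmul_eq_mul] using AddSubmonoid.nsmul_mem _ hb (m - r))


lemma local_gcd {V : Type*} {R : V → V → Prop} (hSC : StronglyConnected R) {d : ℕ} (u : V)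
    (hd : IsGcdOfSet d (cycleLengths R)) : IsGcdOfSet d (cycleLengthsAt R u) := by
  constructor
  · intro k hk
    exact hd.1 k ⟨hk.1, u, hk.2⟩
  · intro e he
    apply hd.2
    rintro k ⟨hkpos, v, hv⟩
    obtain ⟨x, hx⟩ := rtg_path (hSC u v)
    obtain ⟨y, hy⟩ := rtg_path (hSC v u)
    have h1 : PathOfLength R (x + k + y) u u := path_trans (path_trans hx hv) hy
    have he1 : e ∣ x + k + y := he _ ⟨by omega, h1⟩
    rcases Nat.eq_zero_or_pos (x + y) with hxy | hxy
    · have hx0 : x = 0 := by omega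
      have hy0 : y = 0 := by omega
      subst hx0; subst hy0
      simpa using he1
    · have h2 : PathOfLength R (x + y) u u := path_trans hx hy
      have he2 : e ∣ x + y := he _ ⟨hxy, h2⟩
      have hre : x + k + y = (x + y) + k := by ring
      rw [hre] at he1
      exact (Nat.dvd_add_right he2).mp he1

lemma path_fst {V₁ V₂ : Type*} {R₁ : V₁ → V₁ → Prop} {R₂ : V₂ → V₂ → Prop} {k : ℕ}
    {p q : V₁ × V₂} (h : PathOfLength (prodRel R₁ R₂) k p q) : PathOfLength R₁ k p.1 q.1 := by
  obtain ⟨f, h0, hk, hf⟩ := h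
  exact ⟨fun i => (f i).1, by simp [h0], by simp [hk], fun i hi => (hf i hi).1⟩

lemma path_snd {V₁ V₂ : Type*} {R₁ : V₁ → V₁ → Prop} {R₂ : V₂ → V₂ → Prop} {k : ℕ}
    {p q : V₁ × V₂} (h : PathOfLength (prodRel R₁ R₂) k p q) : PathOfLength R₂ k p.2 q.2 := by
  obtain ⟨f, h0, hk, hf⟩ := h
  exact ⟨fun i => (f i).2, by simp [h0], by simp [hk], fun i hi => (hf i hi).2⟩

lemma path_pair {V₁ V₂ : Type*} {R₁ : V₁ → V₁ → Prop} {R₂ : V₂ → V₂ → Prop} {k : ℕ}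
    {u₁ v₁ : V₁} {u₂ v₂ : V₂} (h1 : PathOfLength R₁ k u₁ v₁) (h2 : PathOfLength R₂ k u₂ v₂) :
    PathOfLength (prodRel R₁ R₂) k (u₁, u₂) (v₁, v₂) := by
  obtain ⟨f, hf0, hfk, hf⟩ := h1
  obtain ⟨g, hg0, hgk, hg⟩ := h2
  exact ⟨fun i => (f i, g i), by simp [hf0, hg0], by simp [hfk, hgk],
    fun i hi => ⟨hf i hi, hg i hi⟩⟩

lemma cycles_add {V : Type*} {R : V → V → Prop} (u : V) :
    ∀ a ∈ cycleLengthsAt R u, ∀ b ∈ cycleLengthsAt R u, a + b ∈ cycleLengthsAt R u := by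
  rintro a ⟨ha, hpa⟩ b ⟨hb, hpb⟩
  exact ⟨by omega, path_trans hpa hpb⟩


lemma part1 {V₁ V₂ : Type*} {R₁ : V₁ → V₁ → Prop} {R₂ : V₂ → V₂ → Prop}
    (hSC₁ : StronglyConnected R₁) (hSC₂ : StronglyConnected R₂)
    {d₁ d₂ : ℕ}
    (hd₁ : IsGcdOfSet d₁ (cycleLengths R₁)) (hd₂ : IsGcdOfSet d₂ (cycleLengths R₂))
    (p : V₁ × V₂) (hp : ∃ k, 0 < k ∧ PathOfLength (prodRel R₁ R₂) k p p) :
    IsGcdOfSet (Nat.lcm d₁ d₂) (cycleLengthsAt (prodRel R₁ R₂) p) := by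
  obtain ⟨k₀, hk₀, hc₀⟩ := hp
  have hg1 := local_gcd hSC₁ p.1 hd₁
  have hg2 := local_gcd hSC₂ p.2 hd₂
  constructor
  · rintro k ⟨hk, hpa⟩
    exact Nat.lcm_dvd (hg1.1 k ⟨hk, path_fst hpa⟩) (hg2.1 k ⟨hk, path_snd hpa⟩)
  · intro e he
    have hd1pos : 0 < d₁ := by
      rcases Nat.eq_zero_or_pos d₁ with h | h
      · have hdvd := hg1.1 k₀ ⟨hk₀, path_fst hc₀⟩
        rw [h] at hdvd
        have := Nat.eq_zero_of_zero_dvd hdvd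
        omega
      · exact h
    have hd2pos : 0 < d₂ := by
      rcases Nat.eq_zero_or_pos d₂ with h | h
      · have hdvd := hg2.1 k₀ ⟨hk₀, path_snd hc₀⟩
        rw [h] at hdvd
        have := Nat.eq_zero_of_zero_dvd hdvd
        omega
      · exact h
    set L := Nat.lcm d₁ d₂ with hL
    have hLpos : 0 < L := Nat.pos_of_ne_zero (Nat.lcm_ne_zero (by omega) (by omega))
    obtain ⟨N₁, hN₁⟩ := multiples_mem hg1
    obtain ⟨N₂, hN₂⟩ := multiples_mem hg2
    have Hmem : ∀ n, 0 < n → d₁ ∣ n → d₂ ∣ n → N₁ ≤ n → N₂ ≤ n →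
        n ∈ cycleLengthsAt (prodRel R₁ R₂) p := by
      intro n hn h1 h2 hn1 hn2
      have t1 := hN₁ n hn1 h1
      have t2 := hN₂ n hn2 h2
      have s1 := closure_mem_of_pos (cycles_add p.1) n t1
      have s2 := closure_mem_of_pos (cycles_add p.2) n t2
      rcases s1 with rfl | s1
      · omega
      rcases s2 with h | s2
      · omega
      refine ⟨hn, ?_⟩
      have := path_pair s1.2 s2.2
      simpa using this
    set m := L * (N₁ + N₂ + 1) with hm
    have hd1L : d₁ ∣ L := Nat.dvd_lcm_left d₁ d₂
    have hd2L : d₂ ∣ L := Nat.dvd_lcm_right d₁ d₂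
    have hbig : N₁ + N₂ + 1 ≤ m := by
      rw [hm]; exact Nat.le_mul_of_pos_left _ hLpos
    have hm1 : m ∈ cycleLengthsAt (prodRel R₁ R₂) p := by
      apply Hmem m (by omega) (hd1L.mul_right _) (hd2L.mul_right _) <;> omega
    have hm2 : m + L ∈ cycleLengthsAt (prodRel R₁ R₂) p := by
      have hmeq : m + L = L * (N₁ + N₂ + 2) := by rw [hm]; ring
      rw [hmeq]
      apply Hmem _ (by omega) (hd1L.mul_right _) (hd2L.mul_right _) <;> omega
    have := Nat.dvd_sub (he _ hm2) (he _ hm1)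
    rwa [Nat.add_sub_cancel_left] at this

end KronAux

theorem period_of_kronecker_product {V₁ V₂ : Type*}
    (R₁ : V₁ → V₁ → Prop) (R₂ : V₂ → V₂ → Prop)
    (hSC₁ : StronglyConnected R₁) (hSC₂ : StronglyConnected R₂)
    (d₁ d₂ : ℕ)
    (hd₁ : IsGcdOfSet d₁ (cycleLengths R₁)) (hd₂ : IsGcdOfSet d₂ (cycleLengths R₂)) :
    (∀ p : V₁ × V₂, (∃ k, 0 < k ∧ PathOfLength (prodRel R₁ R₂) k p p) →
        IsGcdOfSet (Nat.lcm d₁ d₂) (cycleLengthsAt (prodRel R₁ R₂) p)) ∧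
      (StronglyConnected (prodRel R₁ R₂) →
        IsGcdOfSet (Nat.lcm d₁ d₂) (cycleLengths (prodRel R₁ R₂))) := by
  constructor
  · exact fun p hp => KronAux.part1 hSC₁ hSC₂ hd₁ hd₂ p hp
  · intro _hSC
    constructor
    · rintro k ⟨hk, p, hpath⟩
      exact Nat.lcm_dvd (hd₁.1 k ⟨hk, p.1, KronAux.path_fst hpath⟩)
        (hd₂.1 k ⟨hk, p.2, KronAux.path_snd hpath⟩)
    · intro e he
      rcases Nat.eq_zero_or_pos d₁ with h1 | h1
      · rw [h1, Nat.lcm_zero_left]; exact dvd_zero e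
      rcases Nat.eq_zero_or_pos d₂ with h2 | h2
      · rw [h2, Nat.lcm_zero_right]; exact dvd_zero e
      have hne1 : (cycleLengths R₁).Nonempty := by
        by_contra h
        rw [Set.not_nonempty_iff_eq_empty] at h
        have h0 := Nat.eq_zero_of_zero_dvd (hd₁.2 0 (by intro k hk; rw [h] at hk; cases hk))
        omega
      have hne2 : (cycleLengths R₂).Nonempty := by
        by_contra h
        rw [Set.not_nonempty_iff_eq_empty] at h
        have h0 := Nat.eq_zero_of_zero_dvd (hd₂.2 0 (by intro k hk; rw [h] at hk; cases hk))
        omega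
      obtain ⟨a, ha, v₁, hv₁⟩ := hne1
      obtain ⟨b, hb, v₂, hv₂⟩ := hne2
      have hab1 : PathOfLength R₁ (a * b) v₁ v₁ := KronAux.path_repeat hv₁ b
      have hab2 : PathOfLength R₂ (a * b) v₂ v₂ := by
        rw [Nat.mul_comm]; exact KronAux.path_repeat hv₂ a
      have hcycle : ∃ k, 0 < k ∧ PathOfLength (prodRel R₁ R₂) k (v₁, v₂) (v₁, v₂) :=
        ⟨a * b, by positivity, KronAux.path_pair hab1 hab2⟩
      apply (KronAux.part1 hSC₁ hSC₂ hd₁ hd₂ _ hcycle).2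
      intro k hk
      exact he k ⟨hk.1, _, hk.2⟩
end

section
/- Let P be the transition matrix of a finite Markov chain (equivalently, a row-stochastic matrix compliant with a directed graph 𝒫). Then lim_{k→∞} P^k exists if and only if every closed strongly connected component (recurrent class) of 𝒫 is aperiodic. -/
set_option linter.unusedSectionVars false
set_option maxHeartbeats 1000000


open Matrix Filter

/-- A square real matrix is row-stochastic if it is nonnegative and all row sums equal 1. -/
def IsRowStochastic {n : Type*} [Fintype n] (A : Matrix n n ℝ) : Prop :=
  (∀ i j, 0 ≤ A i j) ∧ ∀ i, ∑ j, A i j = 1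

section Basics
variable {V : Type*} [Fintype V] [DecidableEq V] (P : Matrix V V ℝ)

lemma pow_stochastic (hP : IsRowStochastic P) (k : ℕ) : IsRowStochastic (P ^ k) := by
  induction k with
  | zero =>
    constructor
    · intro i j; simp [Matrix.one_apply]; split <;> norm_num
    · intro i; simp [Matrix.one_apply]
  | succ k ih =>
    rw [pow_succ]
    constructor
    · intro i j
      exact Finset.sum_nonneg fun w _ => mul_nonneg (ih.1 i w) (hP.1 w j)
    · intro i
      simp_rw [Matrix.mul_apply]
      rw [Finset.sum_comm]
      simp_rw [← Finset.mul_sum]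
      simp [hP.2, ih.2 i]

lemma sum_pos_iff' {s : Finset V} {f : V → ℝ} (h : ∀ i ∈ s, 0 ≤ f i) :
    0 < ∑ i ∈ s, f i ↔ ∃ i ∈ s, 0 < f i := by
  constructor
  · intro hs
    by_contra hc
    push_neg at hc
    have : ∑ i ∈ s, f i = 0 := Finset.sum_eq_zero fun i hi => le_antisymm (hc i hi) (h i hi)
    rw [this] at hs; exact lt_irrefl 0 hs
  · rintro ⟨i, hi, hfi⟩
    calc (0:ℝ) < f i := hfi
    _ ≤ ∑ i ∈ s, f i := Finset.single_le_sum h hi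

lemma pow_entry_pos_iff (hP : IsRowStochastic P) (k : ℕ) (u v : V) :
    0 < (P ^ k) u v ↔ PathOfLength (fun a b => 0 < P a b) k u v := by
  induction k generalizing v with
  | zero =>
    simp only [pow_zero, Matrix.one_apply]
    constructor
    · intro h
      have : u = v := by by_contra hc; simp [hc] at h
      exact ⟨fun _ => u, rfl, by simp [this], by omega⟩
    · rintro ⟨f, h0, hk, -⟩
      simp [← h0, ← hk]
  | succ k ih =>
    rw [pow_succ]
    have hent : (P ^ k * P) u v = ∑ w, (P ^ k) u w * P w v := rfl
    rw [hent, sum_pos_iff' (fun w _ =>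
      mul_nonneg ((pow_stochastic P hP k).1 u w) (hP.1 w v))]
    constructor
    · rintro ⟨w, -, hw⟩
      have h1 : 0 < (P ^ k) u w := by
        rcases mul_pos_iff.mp hw with ⟨a, _⟩ | ⟨a, b⟩
        · exact a
        · exact absurd b (not_lt.2 (hP.1 w v))
      have h2 : 0 < P w v := by
        rcases mul_pos_iff.mp hw with ⟨_, a⟩ | ⟨a, _⟩
        · exact a
        · exact absurd a (not_lt.2 ((pow_stochastic P hP k).1 u w))
      obtain ⟨f, h0, hk, hstep⟩ := (ih w).1 h1
      refine ⟨fun i => if i = k + 1 then v else f i, by simp [h0], by simp, ?_⟩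
      intro i hi
      rcases Nat.lt_or_ge i k with hik | hik
      · simp only [show i ≠ k + 1 by omega, show i + 1 ≠ k + 1 by omega, if_false]
        exact hstep i hik
      · have : i = k := by omega
        subst this
        simp only [show i ≠ i + 1 by omega, if_false, if_pos rfl]
        rwa [hk]
    · rintro ⟨f, h0, hk, hstep⟩
      refine ⟨f k, Finset.mem_univ _, mul_pos ?_ ?_⟩
      · exact (ih (f k)).2 ⟨f, h0, rfl, fun i hi => hstep i (by omega)⟩
      · rw [← hk]; exact hstep k (by omega)

lemma chain_pos (hP : IsRowStochastic P) {a b : ℕ} {u w v : V}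
    (h1 : 0 < (P ^ a) u w) (h2 : 0 < (P ^ b) w v) : 0 < (P ^ (a + b)) u v := by
  rw [pow_add]
  have hent : (P ^ a * P ^ b) u v = ∑ x, (P ^ a) u x * (P ^ b) x v := rfl
  rw [hent, sum_pos_iff' (fun x _ =>
    mul_nonneg ((pow_stochastic P hP a).1 u x) ((pow_stochastic P hP b).1 x v))]
  exact ⟨w, Finset.mem_univ _, mul_pos h1 h2⟩

lemma reach_iff_pow (hP : IsRowStochastic P) (u v : V) :
    Relation.ReflTransGen (fun a b => 0 < P a b) u v ↔ ∃ k, 0 < (P ^ k) u v := by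
  constructor
  · intro h
    induction h with
    | refl => exact ⟨0, by simp [Matrix.one_apply]⟩
    | tail _ hstep ih =>
      obtain ⟨k, hk⟩ := ih
      exact ⟨k + 1, chain_pos P hP hk (by rwa [pow_one])⟩
  · rintro ⟨k, hk⟩
    induction k generalizing v with
    | zero =>
      have : u = v := by
        by_contra hc; simp [pow_zero, Matrix.one_apply, hc] at hk
      exact this ▸ Relation.ReflTransGen.refl
    | succ k ih =>
      rw [pow_succ] at hk
      have hent : (P ^ k * P) u v = ∑ w, (P ^ k) u w * P w v := rfl
      rw [hent, sum_pos_iff' (fun w _ =>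
        mul_nonneg ((pow_stochastic P hP k).1 u w) (hP.1 w v))] at hk
      obtain ⟨w, -, hw⟩ := hk
      have h1 : 0 < (P ^ k) u w := by
        rcases mul_pos_iff.mp hw with ⟨a, _⟩ | ⟨a, b⟩
        · exact a
        · exact absurd b (not_lt.2 (hP.1 w v))
      have h2 : 0 < P w v := by
        rcases mul_pos_iff.mp hw with ⟨_, a⟩ | ⟨a, _⟩
        · exact a
        · exact absurd a (not_lt.2 ((pow_stochastic P hP k).1 u w))
      exact (ih w h1).tail h2

end Basics

lemma gcd_one_cofinite {S : Set ℕ} (hadd : ∀ a ∈ S, ∀ b ∈ S, a + b ∈ S)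
    (hgcd : IsGcdOfSet 1 S) : ∃ N, ∀ n ≥ N, 0 < n → n ∈ S := by
  classical
  set M : AddSubmonoid ℕ := AddSubmonoid.closure S with hM
  have hMS : ∀ x ∈ M, x = 0 ∨ x ∈ S := by
    intro x hx
    induction hx using AddSubmonoid.closure_induction with
    | mem y hy => exact Or.inr hy
    | zero => exact Or.inl rfl
    | add a b _ _ iha ihb =>
      rcases iha with ha | ha
      · rcases ihb with hb | hb
        · exact Or.inl (by omega)
        · exact Or.inr (by simpa [ha] using hb)
      · rcases ihb with hb | hb
        · exact Or.inr (by simpa [hb] using ha)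
        · exact Or.inr (hadd _ ha _ hb)
  -- get a = b + 1 with a b ∈ M
  have h1 : ∃ a b : ℕ, a ∈ M ∧ b ∈ M ∧ a = b + 1 := by
    set H : AddSubgroup ℤ := AddSubgroup.closure ((fun n : ℕ => (n : ℤ)) '' S) with hH
    obtain ⟨g, hg⟩ := Int.subgroup_cyclic H
    have hdvd : ∀ s ∈ S, g ∣ (s : ℤ) := by
      intro s hs
      have : (s : ℤ) ∈ H := AddSubgroup.subset_closure ⟨s, hs, rfl⟩
      rw [hg, AddSubgroup.mem_closure_singleton] at this
      obtain ⟨n, hn⟩ := this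
      exact ⟨n, by rw [← hn, smul_eq_mul]; ring⟩
    have hga : g.natAbs ∣ 1 := by
      apply hgcd.2
      intro k hk
      have := hdvd k hk
      have h2 : g.natAbs ∣ (k : ℤ).natAbs := Int.natAbs_dvd_natAbs.mpr this
      simpa using h2
    have h1H : (1 : ℤ) ∈ H := by
      rw [hg, AddSubgroup.mem_closure_singleton]
      have h : g.natAbs = 1 := Nat.dvd_one.mp hga
      rcases Int.natAbs_eq_iff.mp h with hg1 | hg1
      · exact ⟨1, by rw [hg1]; simp⟩
      · exact ⟨-1, by rw [hg1]; simp⟩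
    rw [hH] at h1H
    have hrep : ∀ x ∈ AddSubgroup.closure ((fun n : ℕ => (n : ℤ)) '' S),
        ∃ a b : ℕ, a ∈ M ∧ b ∈ M ∧ x = (a : ℤ) - b := by
      intro x hx
      induction hx using AddSubgroup.closure_induction with
      | mem y hy =>
        obtain ⟨s, hs, rfl⟩ := hy
        exact ⟨s, 0, AddSubmonoid.subset_closure hs, zero_mem M, by simp⟩
      | zero => exact ⟨0, 0, zero_mem M, zero_mem M, by simp⟩
      | add a b _ _ iha ihb =>
        obtain ⟨a1, b1, ha1, hb1, rfl⟩ := iha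
        obtain ⟨a2, b2, ha2, hb2, rfl⟩ := ihb
        exact ⟨a1 + a2, b1 + b2, add_mem ha1 ha2, add_mem hb1 hb2, by push_cast; ring⟩
      | neg a _ iha =>
        obtain ⟨a1, b1, ha1, hb1, rfl⟩ := iha
        exact ⟨b1, a1, hb1, ha1, by push_cast; ring⟩
    obtain ⟨a, b, ha, hb, hab⟩ := hrep 1 h1H
    exact ⟨a, b, ha, hb, by omega⟩
  obtain ⟨a, b, haM, hbM, hab⟩ := h1
  rcases Nat.eq_zero_or_pos b with hb0 | hbpos
  · -- b = 0, a = 1, so 1 ∈ S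
    subst hb0
    have h1S : 1 ∈ S := by
      rcases hMS a haM with h | h
      · omega
      · rwa [hab] at h
    have key : ∀ n : ℕ, (n + 1) ∈ S := by
      intro n
      induction n with
      | zero => exact h1S
      | succ n ih => exact hadd (n + 1) ih 1 h1S
    refine ⟨1, fun n hn _ => ?_⟩
    obtain ⟨m, rfl⟩ : ∃ m, n = m + 1 := ⟨n - 1, by omega⟩
    exact key m
  · -- b ≥ 1, a = b + 1; every n ≥ b*b is in S
    refine ⟨b * b, fun n hn hnpos => ?_⟩
    set k := n - b * b with hk
    have hkn : n = b * b + k := by omega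
    obtain ⟨q, r, hrb, hqr⟩ : ∃ q r, r < b ∧ b * q + r = k :=
      ⟨k / b, k % b, Nat.mod_lt _ hbpos, Nat.div_add_mod k b⟩
    obtain ⟨s, hsr⟩ : ∃ s, r + s = b + q := ⟨b + q - r, by omega⟩
    have hn_eq : n = r * a + s * b := by
      have : r * a + s * b = r * (b + 1) + s * b := by rw [hab]
      rw [this]
      have h2 : r * (b + 1) + s * b = r + b * (r + s) := by ring
      rw [h2, hsr]
      have hd : b * (b + q) = b * b + b * q := by ring
      omega
    have hnM : n ∈ M := by
      rw [hn_eq]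
      have h1 : r * a ∈ M := by simpa [smul_eq_mul] using nsmul_mem haM r
      have h2 : s * b ∈ M := by simpa [smul_eq_mul] using nsmul_mem hbM s
      exact add_mem h1 h2
    rcases hMS n hnM with h | h
    · omega
    · exact h

section Forward
variable {V : Type*} [Fintype V] [DecidableEq V] (P : Matrix V V ℝ)

lemma entry_tendsto {Q : Matrix V V ℝ} (hQ : Tendsto (fun k => P ^ k) atTop (nhds Q))
    (a b : V) : Tendsto (fun k => (P ^ k) a b) atTop (nhds (Q a b)) := by
  have h1 := tendsto_pi_nhds.mp hQ a
  exact tendsto_pi_nhds.mp h1 b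

lemma forward_dir (hP : IsRowStochastic P) {Q : Matrix V V ℝ}
    (hQ : Tendsto (fun k => P ^ k) atTop (nhds Q)) (u : V)
    (hu : ∀ v : V, Relation.ReflTransGen (fun a b => 0 < P a b) u v →
      Relation.ReflTransGen (fun a b => 0 < P a b) v u) :
    IsGcdOfSet 1 {k | 0 < k ∧ PathOfLength (fun a b => 0 < P a b) k u u} := by
  constructor
  · intro k _; exact one_dvd k
  intro e he
  have hmem : ∀ k, 0 < k → 0 < (P ^ k) u u →
      k ∈ {k | 0 < k ∧ PathOfLength (fun a b => 0 < P a b) k u u} :=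
    fun k hk hpos => ⟨hk, (pow_entry_pos_iff P hP k u u).mp hpos⟩
  -- there is a cycle through u
  have hcyc : ∃ l, 0 < l ∧ 0 < (P ^ l) u u := by
    have : ∃ v0 ∈ Finset.univ, 0 < P u v0 := by
      rw [← sum_pos_iff' (fun j _ => hP.1 u j)]
      rw [hP.2 u]; norm_num
    obtain ⟨v0, -, hv0⟩ := this
    have hr : Relation.ReflTransGen (fun a b => 0 < P a b) u v0 :=
      Relation.ReflTransGen.single hv0
    obtain ⟨l, hl⟩ := (reach_iff_pow P hP v0 u).mp (hu v0 hr)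
    refine ⟨1 + l, by omega, chain_pos P hP (by rwa [pow_one]) hl⟩
  obtain ⟨l0, hl0pos, hl0⟩ := hcyc
  have hene : e ≠ 0 := by
    intro h0
    have := he l0 (hmem l0 hl0pos hl0)
    rw [h0] at this
    exact absurd (Nat.eq_zero_of_zero_dvd this) (by omega)
  -- main case split
  by_cases hQz : ∃ w, Relation.ReflTransGen (fun a b => 0 < P a b) u w ∧ Q u w ≠ 0
  · obtain ⟨w, hrw, hQw⟩ := hQz
    obtain ⟨l, hl⟩ := (reach_iff_pow P hP w u).mp (hu w hrw)
    have hten := entry_tendsto P hQ u w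
    have hQpos : 0 < Q u w := by
      rcases lt_or_eq_of_le (ge_of_tendsto' hten (fun k => (pow_stochastic P hP k).1 u w)) with h | h
      · exact h
      · exact absurd h.symm hQw
    have hev : ∀ᶠ k in atTop, 0 < (P ^ k) u w :=
      hten.eventually (eventually_gt_nhds hQpos)
    obtain ⟨K, hK⟩ := eventually_atTop.mp hev
    have h1 : 0 < (P ^ (K + 1 + l)) u u := chain_pos P hP (hK (K+1) (by omega)) hl
    have h2 : 0 < (P ^ (K + 2 + l)) u u := chain_pos P hP (hK (K+2) (by omega)) hl
    have d1 := he _ (hmem _ (by omega) h1)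
    have d2 := he _ (hmem _ (by omega) h2)
    have h3 := Nat.dvd_sub d2 d1
    have h4 : K + 2 + l - (K + 1 + l) = 1 := by omega
    rwa [h4] at h3
  · -- Q u w = 0 for all w: contradiction with row sum 1
    push_neg at hQz
    have hrowQ : ∑ w, Q u w = 1 := by
      have hs : Tendsto (fun k => ∑ w, (P ^ k) u w) atTop (nhds (∑ w, Q u w)) :=
        tendsto_finset_sum _ (fun w _ => entry_tendsto P hQ u w)
      have hc : Tendsto (fun k => ∑ w, (P ^ k) u w) atTop (nhds 1) := by
        have : (fun k => ∑ w, (P ^ k) u w) = fun _ => (1:ℝ) := by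
          funext k; exact (pow_stochastic P hP k).2 u
        rw [this]; exact tendsto_const_nhds
      exact tendsto_nhds_unique hs hc
    have hzero : ∀ w, Q u w = 0 := by
      intro w
      by_cases hr : Relation.ReflTransGen (fun a b => 0 < P a b) u w
      · exact hQz w hr
      · have : ∀ k, (P ^ k) u w = 0 := by
          intro k
          by_contra hc
          have : 0 < (P ^ k) u w :=
            lt_of_le_of_ne ((pow_stochastic P hP k).1 u w) (Ne.symm hc)
          exact hr ((reach_iff_pow P hP u w).mpr ⟨k, this⟩)
        have : Tendsto (fun k => (P ^ k) u w) atTop (nhds 0) := by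
          simp only [this]; exact tendsto_const_nhds
        exact tendsto_nhds_unique (entry_tendsto P hQ u w) this
    simp [hzero] at hrowQ

end Forward

section Backward
open scoped Classical
variable {V : Type*} [Fintype V] [DecidableEq V] (P : Matrix V V ℝ)

local notation "Reach" => Relation.ReflTransGen (fun a b => 0 < P a b)

def IsRec (v : V) : Prop := ∀ w, Reach v w → Reach w v

lemma exists_recurrent (u : V) : ∃ v, Reach u v ∧ IsRec P v := by
  classical
  set A : Finset V := Finset.univ.filter (fun v => Reach u v) with hA
  have hAne : A.Nonempty := ⟨u, Finset.mem_filter.mpr ⟨Finset.mem_univ u, Relation.ReflTransGen.refl⟩⟩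
  obtain ⟨v, hvA, hvmin⟩ := Finset.exists_min_image A
    (fun v => (Finset.univ.filter (fun w => Reach v w)).card) hAne
  have hvu : Reach u v := by simpa [hA] using hvA
  refine ⟨v, hvu, ?_⟩
  intro w hvw
  have hwA : w ∈ A := by simp [hA]; exact hvu.trans hvw
  have hsub : Finset.univ.filter (fun x => Reach w x) ⊆
      Finset.univ.filter (fun x => Reach v x) := by
    intro x hx
    simp only [Finset.mem_filter, Finset.mem_univ, true_and] at hx ⊢
    exact hvw.trans hx
  have hcard := hvmin w hwA
  have heq := Finset.eq_of_subset_of_card_le hsub hcard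
  have : v ∈ Finset.univ.filter (fun x => Reach v x) :=
    Finset.mem_filter.mpr ⟨Finset.mem_univ v, Relation.ReflTransGen.refl⟩
  rw [← heq] at this
  simpa using this

lemma isRec_of_reach {v x : V} (hv : IsRec P v) (hvx : Reach v x) : IsRec P x := by
  intro y hxy
  have hvy : Reach v y := hvx.trans hxy
  exact (hv y hvy).trans hvx

lemma zero_of_not_reach (hP : IsRowStochastic P) {w x : V} (h : ¬ Reach w x) (k : ℕ) :
    (P ^ k) w x = 0 := by
  by_contra hc
  exact h ((reach_iff_pow P hP w x).mpr
    ⟨k, lt_of_le_of_ne ((pow_stochastic P hP k).1 w x) (Ne.symm hc)⟩)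

/-- A finset is closed if no positive edge leaves it. -/
def IsClosedF (F : Finset V) : Prop := ∀ w ∈ F, ∀ x, 0 < P w x → x ∈ F

lemma closedF_zero (hP : IsRowStochastic P) {F : Finset V} (hF : IsClosedF P F)
    {w x : V} (hw : w ∈ F) (hx : x ∉ F) (k : ℕ) : (P ^ k) w x = 0 := by
  apply zero_of_not_reach P hP _ k
  intro hr
  exact hx (by
    clear hx
    induction hr with
    | refl => exact hw
    | tail _ hstep ih => exact hF _ ih _ hstep)

lemma closedF_rowsum (hP : IsRowStochastic P) {F : Finset V} (hF : IsClosedF P F)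
    {w : V} (hw : w ∈ F) (k : ℕ) : ∑ x ∈ F, (P ^ k) w x = 1 := by
  rw [← (pow_stochastic P hP k).2 w]
  apply Finset.sum_subset (Finset.subset_univ F)
  intro x _ hx
  exact closedF_zero P hP hF hw hx k

lemma mass_mono (hP : IsRowStochastic P) {F : Finset V} (hF : IsClosedF P F) (u : V) :
    Monotone (fun k => ∑ x ∈ F, (P ^ k) u x) := by
  apply monotone_nat_of_le_succ
  intro k
  have hrw : ∀ x, (P ^ (k + 1)) u x = ∑ y, (P ^ k) u y * P y x := by
    intro x; rw [pow_succ]; rfl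
  calc ∑ x ∈ F, (P ^ k) u x
      = ∑ y ∈ F, (P ^ k) u y * ∑ x ∈ F, P y x := by
        apply Finset.sum_congr rfl
        intro y hy
        rw [show ∑ x ∈ F, P y x = 1 by
          have := closedF_rowsum P hP hF hy 1; simpa using this, mul_one]
    _ ≤ ∑ y, (P ^ k) u y * ∑ x ∈ F, P y x := by
        apply Finset.sum_le_sum_of_subset_of_nonneg (Finset.subset_univ F)
        intro y _ _
        exact mul_nonneg ((pow_stochastic P hP k).1 u y)
          (Finset.sum_nonneg fun x _ => hP.1 y x)
    _ = ∑ x ∈ F, (P ^ (k + 1)) u x := by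
        simp_rw [hrw, Finset.mul_sum]
        rw [Finset.sum_comm]

lemma mass_le_one (hP : IsRowStochastic P) (F : Finset V) (u : V) (k : ℕ) :
    ∑ x ∈ F, (P ^ k) u x ≤ 1 := by
  rw [← (pow_stochastic P hP k).2 u]
  apply Finset.sum_le_sum_of_subset_of_nonneg (Finset.subset_univ F)
  intro x _ _
  exact (pow_stochastic P hP k).1 u x

lemma mass_nonneg (hP : IsRowStochastic P) (F : Finset V) (u : V) (k : ℕ) :
    0 ≤ ∑ x ∈ F, (P ^ k) u x :=
  Finset.sum_nonneg fun x _ => (pow_stochastic P hP k).1 u x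

lemma rec_diag_pos (hP : IsRowStochastic P)
    (hyp : ∀ u : V, (∀ v : V, Reach u v → Reach v u) →
      IsGcdOfSet 1 {k | 0 < k ∧ PathOfLength (fun a b => 0 < P a b) k u u})
    {v : V} (hv : IsRec P v) : ∃ N, ∀ k ≥ N, 0 < (P ^ k) v v := by
  have hgcd := hyp v hv
  have hadd : ∀ a ∈ {k | 0 < k ∧ PathOfLength (fun a b => 0 < P a b) k v v},
      ∀ b ∈ {k | 0 < k ∧ PathOfLength (fun a b => 0 < P a b) k v v},
      a + b ∈ {k | 0 < k ∧ PathOfLength (fun a b => 0 < P a b) k v v} := by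
    rintro a ⟨ha, hpa⟩ b ⟨hb, hpb⟩
    refine ⟨by omega, (pow_entry_pos_iff P hP _ v v).mp ?_⟩
    exact chain_pos P hP ((pow_entry_pos_iff P hP a v v).mpr hpa)
      ((pow_entry_pos_iff P hP b v v).mpr hpb)
  obtain ⟨N, hN⟩ := gcd_one_cofinite hadd hgcd
  refine ⟨N + 1, fun k hk => ?_⟩
  exact (pow_entry_pos_iff P hP k v v).mpr (hN k (by omega) (by omega)).2

lemma class_unif_pos (hP : IsRowStochastic P)
    (hyp : ∀ u : V, (∀ v : V, Reach u v → Reach v u) →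
      IsGcdOfSet 1 {k | 0 < k ∧ PathOfLength (fun a b => 0 < P a b) k u u})
    {v : V} (hv : IsRec P v) :
    ∃ m, ∀ w w', Reach v w → Reach v w' → 0 < (P ^ m) w w' := by
  have key : ∀ w w' : V, ∃ N, Reach v w → Reach v w' →
      ∀ k ≥ N, 0 < (P ^ k) w w' := by
    intro w w'
    by_cases hww : Reach v w ∧ Reach v w'
    · obtain ⟨hw, hw'⟩ := hww
      have hrec' : IsRec P w' := isRec_of_reach P hv hw'
      have hreach : Reach w w' := (hv w hw).trans hw'
      obtain ⟨l, hl⟩ := (reach_iff_pow P hP w w').mp hreach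
      obtain ⟨N, hN⟩ := rec_diag_pos P hP hyp hrec'
      refine ⟨l + N, fun _ _ k hk => ?_⟩
      have : k = l + (k - l) := by omega
      rw [this]
      exact chain_pos P hP hl (hN (k - l) (by omega))
    · exact ⟨0, fun h1 h2 => absurd ⟨h1, h2⟩ hww⟩
  choose N hN using key
  refine ⟨Finset.univ.sup (fun w => Finset.univ.sup (N w)), fun w w' h1 h2 => ?_⟩
  apply hN w w' h1 h2
  calc N w w' ≤ Finset.univ.sup (N w) := Finset.le_sup (Finset.mem_univ w')
  _ ≤ Finset.univ.sup (fun w => Finset.univ.sup (N w)) := Finset.le_sup (f := fun w => Finset.univ.sup (N w)) (Finset.mem_univ w)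

lemma class_decomp (hP : IsRowStochastic P)
    {C : Finset V} (hCc : IsClosedF P C) {w : V} (hw : w ∈ C) (a b : ℕ) (x' : V) :
    (P ^ (a + b)) w x' = ∑ x ∈ C, (P ^ a) w x * (P ^ b) x x' := by
  rw [pow_add]
  have : (P ^ a * P ^ b) w x' = ∑ x, (P ^ a) w x * (P ^ b) x x' := rfl
  rw [this]
  symm
  apply Finset.sum_subset (Finset.subset_univ C)
  intro x _ hx
  rw [closedF_zero P hP hCc hw hx a, zero_mul]

lemma class_limit (hP : IsRowStochastic P)
    (hyp : ∀ u : V, (∀ v : V, Reach u v → Reach v u) →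
      IsGcdOfSet 1 {k | 0 < k ∧ PathOfLength (fun a b => 0 < P a b) k u u})
    {v' : V} (hv' : IsRec P v') :
    ∃ L : ℝ, ∃ Mx mn : ℕ → ℝ,
      Tendsto Mx atTop (nhds L) ∧ Tendsto mn atTop (nhds L) ∧
      ∀ k w, Reach v' w → mn k ≤ (P ^ k) w v' ∧ (P ^ k) w v' ≤ Mx k := by
  classical
  set C : Finset V := Finset.univ.filter (fun w => Reach v' w) with hCdef
  have hmemC : ∀ w, w ∈ C ↔ Reach v' w := by
    intro w; simp [hCdef]
  have hC : C.Nonempty := ⟨v', (hmemC v').mpr Relation.ReflTransGen.refl⟩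
  have hCc : IsClosedF P C := by
    intro w hw x hx
    exact (hmemC x).mpr (((hmemC w).mp hw).tail hx)
  obtain ⟨m, hm⟩ := class_unif_pos P hP hyp hv'
  set Mx : ℕ → ℝ := fun k => C.sup' hC (fun w => (P ^ k) w v') with hMx
  set mn : ℕ → ℝ := fun k => C.inf' hC (fun w => (P ^ k) w v') with hmn
  have hv'C : v' ∈ C := (hmemC v').mpr Relation.ReflTransGen.refl
  -- basic bounds
  have hMle : ∀ k w, w ∈ C → (P ^ k) w v' ≤ Mx k :=
    fun k w hw => Finset.le_sup' (fun w => (P ^ k) w v') hw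
  have hmle : ∀ k w, w ∈ C → mn k ≤ (P ^ k) w v' :=
    fun k w hw => Finset.inf'_le (fun w => (P ^ k) w v') hw
  have hmn_nonneg : ∀ k, 0 ≤ mn k := by
    intro k
    apply Finset.le_inf'
    intro w _
    exact (pow_stochastic P hP k).1 w v'
  have hMx_le_one : ∀ k, Mx k ≤ 1 := by
    intro k
    apply Finset.sup'_le
    intro w hw
    calc (P ^ k) w v' ≤ ∑ x, (P ^ k) w x :=
          Finset.single_le_sum (fun x _ => (pow_stochastic P hP k).1 w x) (Finset.mem_univ v')
    _ = 1 := (pow_stochastic P hP k).2 w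
  have hmnMx : ∀ k, mn k ≤ Mx k := fun k => le_trans (hmle k v' hv'C) (hMle k v' hv'C)
  -- monotonicity
  have hManti : Antitone Mx := by
    apply antitone_nat_of_succ_le
    intro k
    apply Finset.sup'_le
    intro w hw
    have hdec := class_decomp P hP hCc hw 1 k v'
    rw [show 1 + k = k + 1 from by omega] at hdec
    rw [hdec]
    calc ∑ x ∈ C, (P ^ 1) w x * (P ^ k) x v'
        ≤ ∑ x ∈ C, (P ^ 1) w x * Mx k := by
          apply Finset.sum_le_sum
          intro x hx
          exact mul_le_mul_of_nonneg_left (hMle k x hx) ((pow_stochastic P hP 1).1 w x)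
      _ = Mx k := by rw [← Finset.sum_mul, closedF_rowsum P hP hCc hw 1, one_mul]
  have hmmono : Monotone mn := by
    apply monotone_nat_of_le_succ
    intro k
    apply Finset.le_inf'
    intro w hw
    have hdec := class_decomp P hP hCc hw 1 k v'
    rw [show 1 + k = k + 1 from by omega] at hdec
    rw [hdec]
    calc mn k = ∑ x ∈ C, (P ^ 1) w x * mn k := by
          rw [← Finset.sum_mul, closedF_rowsum P hP hCc hw 1, one_mul]
      _ ≤ ∑ x ∈ C, (P ^ 1) w x * (P ^ k) x v' := by
          apply Finset.sum_le_sum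
          intro x hx
          exact mul_le_mul_of_nonneg_left (hmle k x hx) ((pow_stochastic P hP 1).1 w x)
  -- limits
  have hbddB : BddBelow (Set.range Mx) :=
    ⟨0, by rintro x ⟨k, rfl⟩; exact le_trans (hmn_nonneg k) (hmnMx k)⟩
  have hbddA : BddAbove (Set.range mn) :=
    ⟨1, by rintro x ⟨k, rfl⟩; exact le_trans (hmnMx k) (hMx_le_one k)⟩
  have hMtend : Tendsto Mx atTop (nhds (⨅ k, Mx k)) := tendsto_atTop_ciInf hManti hbddB
  have hmtend : Tendsto mn atTop (nhds (⨆ k, mn k)) := tendsto_atTop_ciSup hmmono hbddA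
  set L : ℝ := ⨅ k, Mx k with hL
  set L' : ℝ := ⨆ k, mn k with hL'
  -- contraction
  set δ : ℝ := C.inf' hC (fun w => C.inf' hC (fun x => (P ^ m) w x)) with hδdef
  have hδpos : 0 < δ := by
    refine (Finset.lt_inf'_iff hC).mpr fun w hw => (Finset.lt_inf'_iff hC).mpr fun x hx =>
      hm w x ((hmemC w).mp hw) ((hmemC x).mp hx)
  have hδle : ∀ w x, w ∈ C → x ∈ C → δ ≤ (P ^ m) w x := by
    intro w x hw hx
    calc δ ≤ C.inf' hC (fun x => (P ^ m) w x) := Finset.inf'_le _ hw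
    _ ≤ (P ^ m) w x := Finset.inf'_le _ hx
  set c : ℝ := (C.card : ℝ) with hc
  have hcontr : ∀ k, Mx (k + m) - mn (k + m) ≤ (1 - c * δ) * (Mx k - mn k) := by
    intro k
    set Sk : ℝ := ∑ x ∈ C, (P ^ k) x v' with hSk
    have hkey : ∀ w ∈ C,
        (P ^ (k + m)) w v' ≤ δ * Sk + (1 - c * δ) * Mx k ∧
        δ * Sk + (1 - c * δ) * mn k ≤ (P ^ (k + m)) w v' := by
      intro w hw
      have hdec := class_decomp P hP hCc hw m k v'
      rw [show m + k = k + m from by omega] at hdec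
      have hsplit : ∑ x ∈ C, (P ^ m) w x * (P ^ k) x v'
          = δ * Sk + ∑ x ∈ C, ((P ^ m) w x - δ) * (P ^ k) x v' := by
        rw [hSk, Finset.mul_sum, ← Finset.sum_add_distrib]
        apply Finset.sum_congr rfl
        intro x _
        ring
      have hsum_coef : ∑ x ∈ C, ((P ^ m) w x - δ) = 1 - c * δ := by
        rw [Finset.sum_sub_distrib, closedF_rowsum P hP hCc hw m, Finset.sum_const,
          nsmul_eq_mul, hc]
      constructor
      · rw [hdec, hsplit]
        have : ∑ x ∈ C, ((P ^ m) w x - δ) * (P ^ k) x v'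
            ≤ ∑ x ∈ C, ((P ^ m) w x - δ) * Mx k := by
          apply Finset.sum_le_sum
          intro x hx
          exact mul_le_mul_of_nonneg_left (hMle k x hx) (by linarith [hδle w x hw hx])
        rw [← Finset.sum_mul, hsum_coef] at this
        linarith
      · rw [hdec, hsplit]
        have : ∑ x ∈ C, ((P ^ m) w x - δ) * mn k
            ≤ ∑ x ∈ C, ((P ^ m) w x - δ) * (P ^ k) x v' := by
          apply Finset.sum_le_sum
          intro x hx
          exact mul_le_mul_of_nonneg_left (hmle k x hx) (by linarith [hδle w x hw hx])
        rw [← Finset.sum_mul, hsum_coef] at this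
        linarith
    have hMxb : Mx (k + m) ≤ δ * Sk + (1 - c * δ) * Mx k :=
      Finset.sup'_le _ _ (fun w hw => (hkey w hw).1)
    have hmnb : δ * Sk + (1 - c * δ) * mn k ≤ mn (k + m) :=
      Finset.le_inf' _ _ (fun w hw => (hkey w hw).2)
    linarith
  -- conclude L = L'
  have hLL' : L' ≤ L :=
    le_of_tendsto_of_tendsto' hmtend hMtend hmnMx
  have hshiftM : Tendsto (fun k => Mx (k + m)) atTop (nhds L) :=
    hMtend.comp (tendsto_add_atTop_nat m)
  have hshiftm : Tendsto (fun k => mn (k + m)) atTop (nhds L') :=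
    hmtend.comp (tendsto_add_atTop_nat m)
  have hineq : L - L' ≤ (1 - c * δ) * (L - L') := by
    apply le_of_tendsto_of_tendsto' (hshiftM.sub hshiftm)
      (((hMtend.sub hmtend).const_mul (1 - c * δ)))
    exact hcontr
  have hcpos : 0 < c := by
    rw [hc]
    exact_mod_cast Finset.card_pos.mpr hC
  have hLeq : L = L' := by
    by_contra hne
    have hlt : L' < L := lt_of_le_of_ne hLL' fun h => hne h.symm
    have h1 : 0 < c * δ := mul_pos hcpos hδpos
    nlinarith [mul_pos h1 (sub_pos.mpr hlt)]
  refine ⟨L, Mx, mn, hMtend, hLeq ▸ hmtend, fun k w hw => ?_⟩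
  have hwC : w ∈ C := (hmemC w).mpr hw
  exact ⟨hmle k w hwC, hMle k w hwC⟩

lemma recF_closed (hP : IsRowStochastic P) :
    IsClosedF P (Finset.univ.filter (fun x => IsRec P x)) := by
  intro w hw x hx
  simp only [Finset.mem_filter, Finset.mem_univ, true_and] at hw ⊢
  exact isRec_of_reach P hw (Relation.ReflTransGen.single hx)

lemma transient_decay [Nonempty V] (hP : IsRowStochastic P) (u : V) :
    Tendsto (fun k => ∑ x ∈ Finset.univ.filter (fun x => ¬ IsRec P x), (P ^ k) u x)
      atTop (nhds 0) := by
  classical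
  set RecF : Finset V := Finset.univ.filter (fun x => IsRec P x) with hRecF
  have hRc : IsClosedF P RecF := recF_closed P hP
  set t : ℕ → V → ℝ := fun k x => ∑ y ∈ Finset.univ.filter (fun y => ¬ IsRec P y), (P ^ k) x y
    with ht
  set g : ℕ → V → ℝ := fun k x => ∑ y ∈ RecF, (P ^ k) x y with hg
  have htg : ∀ k x, t k x = 1 - g k x := by
    intro k x
    have := Finset.sum_filter_add_sum_filter_not Finset.univ (fun y => IsRec P y)
      (fun y => (P ^ k) x y)
    rw [(pow_stochastic P hP k).2 x] at this
    simp only [ht, hg, hRecF]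
    linarith
  -- uniform positivity of recurrent mass
  have hl : ∀ x : V, ∃ l, 0 < g l x := by
    intro x
    obtain ⟨v, hxv, hvrec⟩ := exists_recurrent P x
    obtain ⟨l, hlpos⟩ := (reach_iff_pow P hP x v).mp hxv
    refine ⟨l, lt_of_lt_of_le hlpos ?_⟩
    apply Finset.single_le_sum (fun y _ => (pow_stochastic P hP l).1 x y)
    simp [hRecF, hvrec]
  choose l hlp using hl
  set m : ℕ := Finset.univ.sup l with hm
  have hgm : ∀ x, 0 < g m x := by
    intro x
    exact lt_of_lt_of_le (hlp x) (mass_mono P hP hRc x (Finset.le_sup (Finset.mem_univ x)))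
  set ε : ℝ := Finset.univ.inf' Finset.univ_nonempty (fun x => g m x) with hε
  have hεpos : 0 < ε := (Finset.lt_inf'_iff _).mpr (fun x _ => hgm x)
  have hεle : ∀ x, ε ≤ g m x := fun x => Finset.inf'_le _ (Finset.mem_univ x)
  -- t m x ≤ 1 - ε
  have htm : ∀ x, t m x ≤ 1 - ε := by
    intro x
    rw [htg]
    linarith [hεle x]
  have htzero : ∀ x, IsRec P x → ∀ k, t k x = 0 := by
    intro x hx k
    apply Finset.sum_eq_zero
    intro y hy
    simp only [Finset.mem_filter, Finset.mem_univ, true_and] at hy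
    apply closedF_zero P hP hRc _ _ k
    · simp [hRecF, hx]
    · simp [hRecF, hy]
  have htnonneg : ∀ k x, 0 ≤ t k x :=
    fun k x => Finset.sum_nonneg fun y _ => (pow_stochastic P hP k).1 x y
  -- contraction
  have hcontr : ∀ k, t (k + m) u ≤ (1 - ε) * t k u := by
    intro k
    have h1 : ∀ x, (P ^ (k + m)) u x = ∑ y, (P ^ k) u y * (P ^ m) y x := by
      intro x; rw [pow_add]; rfl
    have hswap : t (k + m) u = ∑ y, (P ^ k) u y * t m y := by
      simp only [ht]
      simp_rw [h1]
      rw [Finset.sum_comm]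
      apply Finset.sum_congr rfl
      intro y _
      rw [Finset.mul_sum]
    calc t (k + m) u = ∑ y, (P ^ k) u y * t m y := hswap
      _ = ∑ y ∈ Finset.univ.filter (fun y => ¬ IsRec P y), (P ^ k) u y * t m y := by
          symm
          apply Finset.sum_subset (Finset.subset_univ _)
          intro y _ hy
          have hrec : IsRec P y := by simpa using hy
          rw [htzero y hrec m, mul_zero]
      _ ≤ ∑ y ∈ Finset.univ.filter (fun y => ¬ IsRec P y), (P ^ k) u y * (1 - ε) := by
          apply Finset.sum_le_sum
          intro y _
          exact mul_le_mul_of_nonneg_left (htm y) ((pow_stochastic P hP k).1 u y)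
      _ = (1 - ε) * t k u := by
          rw [← Finset.sum_mul]
          simp only [ht]
          ring
  have htanti : Antitone (fun k => t k u) := by
    apply antitone_nat_of_succ_le
    intro k
    rw [htg, htg]
    have := mass_mono P hP hRc u (Nat.le_succ k)
    simp only [hg]
    simp only [hg, hRecF] at this ⊢
    linarith [this]
  have htendt : Tendsto (fun k => t k u) atTop (nhds (⨅ k, t k u)) :=
    tendsto_atTop_ciInf htanti ⟨0, by rintro x ⟨k, rfl⟩; exact htnonneg k u⟩
  set τ : ℝ := ⨅ k, t k u with hτ
  have hτ0 : 0 ≤ τ :=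
    le_of_tendsto_of_tendsto' tendsto_const_nhds htendt (fun k => htnonneg k u)
  have hshift : Tendsto (fun k => t (k + m) u) atTop (nhds τ) :=
    htendt.comp (tendsto_add_atTop_nat m)
  have hle : τ ≤ (1 - ε) * τ :=
    le_of_tendsto_of_tendsto' hshift (htendt.const_mul (1 - ε)) hcontr
  have hτeq : τ = 0 := by nlinarith [mul_nonneg hεpos.le hτ0]
  exact hτeq ▸ htendt

lemma half_tendsto : Tendsto (fun n : ℕ => n / 2) atTop atTop :=
  tendsto_atTop.mpr fun b => eventually_atTop.mpr ⟨2 * b, fun n hn => by omega⟩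

lemma half_tendsto' : Tendsto (fun n : ℕ => n - n / 2) atTop atTop :=
  tendsto_atTop.mpr fun b => eventually_atTop.mpr ⟨2 * b, fun n hn => by omega⟩

lemma entry_limit [Nonempty V] (hP : IsRowStochastic P)
    (hyp : ∀ u : V, (∀ v : V, Reach u v → Reach v u) →
      IsGcdOfSet 1 {k | 0 < k ∧ PathOfLength (fun a b => 0 < P a b) k u u})
    (u v' : V) : ∃ L, Tendsto (fun k => (P ^ k) u v') atTop (nhds L) := by
  classical
  by_cases hrec : IsRec P v'
  · -- recurrent target
    obtain ⟨L, Mx, mn, hMtend, hmtend, hbound⟩ := class_limit P hP hyp hrec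
    set CF : Finset V := Finset.univ.filter (fun w => Reach v' w) with hCF
    have hmemC : ∀ w, w ∈ CF ↔ Reach v' w := fun w => by simp [hCF]
    have hCc : IsClosedF P CF := fun w hw x hx =>
      (hmemC x).mpr (((hmemC w).mp hw).tail hx)
    set h : ℕ → ℝ := fun k => ∑ x ∈ CF, (P ^ k) u x with hh
    have hhmono : Monotone h := mass_mono P hP hCc u
    have hhbdd : BddAbove (Set.range h) :=
      ⟨1, by rintro x ⟨k, rfl⟩; exact mass_le_one P hP CF u k⟩
    have hhtend : Tendsto h atTop (nhds (⨆ k, h k)) := tendsto_atTop_ciSup hhmono hhbdd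
    set α : ℝ := ⨆ k, h k with hα
    -- zero for recurrent states outside the class
    have hzero : ∀ y, ¬ Reach v' y → IsRec P y → ∀ k', (P ^ k') y v' = 0 := by
      intro y hy hyrec k'
      apply zero_of_not_reach P hP _ k'
      intro hr
      exact hy (hyrec v' hr)
    -- the double bound
    have hbd : ∀ n : ℕ,
        h (n / 2) * mn (n - n / 2) ≤ (P ^ n) u v' ∧
        (P ^ n) u v' ≤ h (n / 2) * Mx (n - n / 2) +
          ∑ x ∈ Finset.univ.filter (fun x => ¬ IsRec P x), (P ^ (n / 2)) u x := by
      intro n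
      set k : ℕ := n / 2 with hk
      set k' : ℕ := n - n / 2 with hk'
      have hsum : (P ^ n) u v' = ∑ y, (P ^ k) u y * (P ^ k') y v' := by
        rw [show n = k + k' from by omega, pow_add]; rfl
      have hterm_nonneg : ∀ y, 0 ≤ (P ^ k) u y * (P ^ k') y v' := fun y =>
        mul_nonneg ((pow_stochastic P hP k).1 u y) ((pow_stochastic P hP k').1 y v')
      constructor
      · -- lower bound
        rw [hsum]
        calc h k * mn k' = ∑ y ∈ CF, (P ^ k) u y * mn k' := by
              rw [← Finset.sum_mul]
          _ ≤ ∑ y ∈ CF, (P ^ k) u y * (P ^ k') y v' := by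
              apply Finset.sum_le_sum
              intro y hy
              exact mul_le_mul_of_nonneg_left ((hbound k' y ((hmemC y).mp hy)).1)
                ((pow_stochastic P hP k).1 u y)
          _ ≤ ∑ y, (P ^ k) u y * (P ^ k') y v' := by
              apply Finset.sum_le_sum_of_subset_of_nonneg (Finset.subset_univ CF)
              intro y _ _
              exact hterm_nonneg y
      · -- upper bound
        rw [hsum, ← Finset.sum_filter_add_sum_filter_not Finset.univ (fun y => Reach v' y)
          (fun y => (P ^ k) u y * (P ^ k') y v')]
        have hub1 : ∑ y ∈ Finset.univ.filter (fun y => Reach v' y),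
            (P ^ k) u y * (P ^ k') y v' ≤ h k * Mx k' := by
          rw [hh, Finset.sum_mul]
          apply Finset.sum_le_sum
          intro y hy
          simp only [Finset.mem_filter, Finset.mem_univ, true_and] at hy
          exact mul_le_mul_of_nonneg_left ((hbound k' y hy).2)
            ((pow_stochastic P hP k).1 u y)
        have hub2 : ∑ y ∈ Finset.univ.filter (fun y => ¬ Reach v' y),
            (P ^ k) u y * (P ^ k') y v' ≤
            ∑ x ∈ Finset.univ.filter (fun x => ¬ IsRec P x), (P ^ k) u x := by
          calc ∑ y ∈ Finset.univ.filter (fun y => ¬ Reach v' y),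
                (P ^ k) u y * (P ^ k') y v'
              ≤ ∑ y ∈ Finset.univ.filter (fun y => ¬ Reach v' y),
                (if IsRec P y then 0 else (P ^ k) u y) := by
                apply Finset.sum_le_sum
                intro y hy
                simp only [Finset.mem_filter, Finset.mem_univ, true_and] at hy
                by_cases hyr : IsRec P y
                · rw [if_pos hyr, hzero y hy hyr k', mul_zero]
                · rw [if_neg hyr]
                  apply mul_le_of_le_one_right ((pow_stochastic P hP k).1 u y)
                  calc (P ^ k') y v' ≤ ∑ x, (P ^ k') y x :=
                        Finset.single_le_sum (fun x _ => (pow_stochastic P hP k').1 y x)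
                          (Finset.mem_univ v')
                    _ = 1 := (pow_stochastic P hP k').2 y
            _ ≤ ∑ y, (if IsRec P y then 0 else (P ^ k) u y) := by
                apply Finset.sum_le_sum_of_subset_of_nonneg (Finset.subset_univ _)
                intro y _ _
                by_cases hyr : IsRec P y
                · rw [if_pos hyr]
                · rw [if_neg hyr]; exact (pow_stochastic P hP k).1 u y
            _ = ∑ x ∈ Finset.univ.filter (fun x => ¬ IsRec P x), (P ^ k) u x := by
                rw [Finset.sum_filter]
                apply Finset.sum_congr rfl
                intro y _
                by_cases hyr : IsRec P y <;> simp [hyr]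
        linarith
    refine ⟨α * L, ?_⟩
    have hlow : Tendsto (fun n => h (n / 2) * mn (n - n / 2)) atTop (nhds (α * L)) :=
      (hhtend.comp half_tendsto).mul (hmtend.comp half_tendsto')
    have ht0 := transient_decay P hP u
    have hup : Tendsto (fun n => h (n / 2) * Mx (n - n / 2) +
        ∑ x ∈ Finset.univ.filter (fun x => ¬ IsRec P x), (P ^ (n / 2)) u x)
        atTop (nhds (α * L)) := by
      have := ((hhtend.comp half_tendsto).mul (hMtend.comp half_tendsto')).add
        (ht0.comp half_tendsto)
      simpa using this
    exact tendsto_of_tendsto_of_tendsto_of_le_of_le hlow hup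
      (fun n => (hbd n).1) (fun n => (hbd n).2)
  · -- transient target
    refine ⟨0, ?_⟩
    have hub := transient_decay P hP u
    apply tendsto_of_tendsto_of_tendsto_of_le_of_le tendsto_const_nhds hub
    · intro k
      exact (pow_stochastic P hP k).1 u v'
    · intro k
      apply Finset.single_le_sum (fun x _ => (pow_stochastic P hP k).1 u x)
      simp [hrec]

end Backward

/-- The powers of a finite row-stochastic matrix converge if and only if every
closed strongly connected component (recurrent class) of the directed graph of
positive entries is aperiodic. A vertex `u` lies in a closed class iff every
vertex reachable from `u` can reach `u` back; aperiodicity of that class is the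
statement that the gcd of the lengths of cycles through `u` is `1`. -/
theorem stochastic_powers_converge_iff {V : Type*} [Fintype V] [DecidableEq V]
    (P : Matrix V V ℝ) (hP : IsRowStochastic P) :
    (∃ Q : Matrix V V ℝ, Tendsto (fun k => P ^ k) atTop (nhds Q)) ↔
      ∀ u : V,
        (∀ v : V, Relation.ReflTransGen (fun a b => 0 < P a b) u v →
          Relation.ReflTransGen (fun a b => 0 < P a b) v u) →
        IsGcdOfSet 1 {k | 0 < k ∧ PathOfLength (fun a b => 0 < P a b) k u u} := by
  constructor
  · rintro ⟨Q, hQ⟩ u hu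
    exact forward_dir P hP hQ u hu
  · intro hyp
    rcases isEmpty_or_nonempty V with hV | hV
    · refine ⟨1, ?_⟩
      have he : (fun k : ℕ => P ^ k) = fun _ => (1 : Matrix V V ℝ) := by
        funext k
        ext i j
        exact isEmptyElim i
      rw [he]
      exact tendsto_const_nhds
    · choose L hL using fun u v' => entry_limit P hP hyp u v'
      refine ⟨Matrix.of L, ?_⟩
      apply tendsto_pi_nhds.mpr
      intro a
      apply tendsto_pi_nhds.mpr
      intro b
      exact hL a b
end
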